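/- Safety certificate soundness: Let X_I, X_U ⊆ ℝⁿ be disjoint, V : ℝⁿ → ℝ with V(x) ≤ 0 on X_I and V(x) > 0 on X_U. Let T ∈ ℕ₊ and x : ℕ → ℝⁿ a trajectory with x(0) ∈ X_I satisfying V(x(k+1)) - V(x(k)) < (1/T)(inf_{x∈X_U}V(x) - sup_{x∈X_I}V(x)) for all k < T. Then x(k) ∉ X_U for all 0 ≤ k ≤ T. -/
import Mathlib


theorem safety_certificate_sound {n : ℕ}
    (XI XU : Set (Fin n → ℝ)) (V : (Fin n → ℝ) → ℝ)
    (hdisj : XI ∩ XU = ∅)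
    (hIne : XI.Nonempty) (hUne : XU.Nonempty)
    (hbddI : BddAbove (V '' XI)) (hbddU : BddBelow (V '' XU))
    (hinit : ∀ y ∈ XI, V y ≤ 0)
    (hunsafe : ∀ y ∈ XU, V y > 0)
    (T : ℕ) (hT : 0 < T)
    (x : ℕ → (Fin n → ℝ)) (hx0 : x 0 ∈ XI)
    (hdec : ∀ k < T, V (x (k + 1)) - V (x k) <
      (1 / (T : ℝ)) * (sInf (V '' XU) - sSup (V '' XI))) :
    ∀ k ≤ T, x k ∉ XU := by
  set δ : ℝ := (1 / (T : ℝ)) * (sInf (V '' XU) - sSup (V '' XI)) with hδ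
  have hsup : V (x 0) ≤ sSup (V '' XI) := le_csSup hbddI ⟨x 0, hx0, rfl⟩
  have hsupI : sSup (V '' XI) ≤ 0 := by
    apply csSup_le (hIne.image V)
    rintro v ⟨y, hy, rfl⟩; exact hinit y hy
  have hinfU : 0 ≤ sInf (V '' XU) := by
    apply le_csInf (hUne.image V)
    rintro v ⟨y, hy, rfl⟩; exact (hunsafe y hy).le
  have hδpos : 0 ≤ δ := by
    apply mul_nonneg
    · positivity
    · linarith
  -- key bound
  have key : ∀ k, 1 ≤ k → k ≤ T → V (x k) < V (x 0) + k * δ := by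
    intro k hk1 hkT
    induction k with
    | zero => omega
    | succ m ih =>
      rcases Nat.eq_or_lt_of_le hk1 with h1 | h1
      · have h0 : V (x 1) - V (x 0) < δ := hdec 0 hT
        rw [← h1]; push_cast; linarith
      · have hm1 : 1 ≤ m := by omega
        have hmT : m ≤ T := by omega
        have hstep : V (x (m + 1)) - V (x m) < δ := hdec m (by omega)
        have := ih hm1 hmT
        push_cast; push_cast at this; linarith
  intro k hk hmem
  rcases Nat.eq_zero_or_pos k with rfl | hk1
  · have : x 0 ∈ XI ∩ XU := ⟨hx0, hmem⟩
    rw [hdisj] at this; exact this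
  · have h1 := key k hk1 hk
    have h2 : sInf (V '' XU) ≤ V (x k) := csInf_le hbddU ⟨x k, hmem, rfl⟩
    have hkδ : (k : ℝ) * δ ≤ (T : ℝ) * δ := by
      apply mul_le_mul_of_nonneg_right _ hδpos
      exact_mod_cast hk
    have hTδ : (T : ℝ) * δ = sInf (V '' XU) - sSup (V '' XI) := by
      rw [hδ]; field_simp
    linarith
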